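/- arXiv:2509.00162 — 2 statements merged into one kernel-verified Lean document; each statement's English description precedes it below -/
import Mathlib

section
/- Let χ be the substitution on {a,b} with χ(a) = aab and χ(b) = abb, and let X_χ be its substitution subshift. Then there exists a continuous surjection F : X_χ → X_χ satisfying F ∘ σ⁷ = σ ∘ F; that is, (X_χ, σ) is a topological factor of (X_χ, σ⁷). -/
open Set Topology Classical

noncomputable section

/-- The left shift `σ` on bi-infinite sequences: `(σ x) n = x (n+1)`. -/
def shiftMap {A : Type} (x : ℤ → A) : ℤ → A := fun n => x (n + 1)

/-- The shift by an integer amount: `shiftZ n x = σ^n x`. -/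
def shiftZ {A : Type} (n : ℤ) (x : ℤ → A) : ℤ → A := fun m => x (m + n)

/-- A bi-infinite sequence is Toeplitz if every coordinate is periodically repeated. -/
def IsToeplitz {A : Type} (x : ℤ → A) : Prop :=
  ∀ i : ℤ, ∃ p : ℕ, 0 < p ∧ ∀ k : ℤ, x (i + k * (p : ℤ)) = x i

/-- The closure of the full shift orbit of `x`. -/
def orbitClosure {A : Type} [TopologicalSpace A] (x : ℤ → A) : Set (ℤ → A) :=
  closure {y | ∃ n : ℤ, shiftZ n x = y}

/-- The finite word `x_i x_{i+1} ⋯ x_{i+n-1}`. -/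
def seqWord {A : Type} (x : ℤ → A) (i : ℤ) (n : ℕ) : List A :=
  List.ofFn fun m : Fin n => x (i + (m : ℕ))

/-- Iterates `θ^k` of a substitution, applied to a letter. -/
def substPow {A : Type} (θ : A → List A) : ℕ → A → List A
  | 0, a => [a]
  | k + 1, a => (θ a).flatMap (substPow θ k)

/-- The substitution subshift of `θ`: all sequences whose finite subwords occur in
some `θ^k(a)`. -/
def substShift {A : Type} (θ : A → List A) : Set (ℤ → A) :=
  {x | ∀ i : ℤ, ∀ n : ℕ, ∃ (k : ℕ) (a : A), (seqWord x i n).IsInfix (substPow θ k a)}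

/-- The full orbit of `x` under an (invertible) map `S`, within the set `X`. -/
def orbitIn {α : Type} (S : α → α) (X : Set α) (x : α) : Set α :=
  {y | y ∈ X ∧ ∃ n : ℕ, S^[n] x = y ∨ S^[n] y = x}

/-- Every `S`-orbit within `X` is dense in `X`. -/
def MinimalOn {α : Type} [TopologicalSpace α] (S : α → α) (X : Set α) : Prop :=
  ∀ x ∈ X, X ⊆ closure (orbitIn S X x)

/-- Every `T`-orbit in `X` is the union of exactly `c` distinct `S`-orbits. -/
def OrbitNumberOn {α : Type} (T S : α → α) (X : Set α) (c : ℕ) : Prop :=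
  ∀ x ∈ X, ∃ r : Fin c → α,
    (∀ i, r i ∈ orbitIn T X x) ∧
    (∀ i j, i ≠ j → r j ∉ orbitIn S X (r i)) ∧
    (∀ y ∈ orbitIn T X x, ∃ i, y ∈ orbitIn S X (r i))

/-- `S` restricts to a homeomorphism of the subset `X`. -/
def RestrictsToHomeomorph {α : Type} [TopologicalSpace α] (S : α → α) (X : Set α) : Prop :=
  ∃ e : X ≃ₜ X, ∀ x : X, (e x : α) = S (x : α)

/-- The systems `(X, S)` and `(Y, R)` are topologically conjugate. -/
def TopConj {α β : Type} [TopologicalSpace α] [TopologicalSpace β]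
    (X : Set α) (S : α → α) (Y : Set β) (R : β → β) : Prop :=
  ∃ (hS : Set.MapsTo S X X) (hR : Set.MapsTo R Y Y) (h : X ≃ₜ Y),
    ∀ x : X, h (Set.MapsTo.restrict S X X hS x) = Set.MapsTo.restrict R Y Y hR (h x)

/-- `(Y, R)` is a topological factor of `(X, S)`. -/
def IsFactorOn {α β : Type} [TopologicalSpace α] [TopologicalSpace β]
    (X : Set α) (S : α → α) (Y : Set β) (R : β → β) : Prop :=
  ∃ F : α → β, Set.MapsTo F X Y ∧ ContinuousOn F X ∧ Set.SurjOn F X Y ∧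
    ∀ x ∈ X, F (S x) = R (F x)

/-- `(X, S)` is a Toeplitz flow: it is topologically conjugate to the orbit closure of
some Toeplitz sequence over some finite alphabet, with the shift map. -/
def IsToeplitzFlow {α : Type} [TopologicalSpace α] (X : Set α) (S : α → α) : Prop :=
  ∃ (B : Type) (_ : Fintype B) (z : ℤ → B), IsToeplitz z ∧
    (letI : TopologicalSpace B := ⊥
     TopConj X S (orbitClosure z) shiftMap)

/-- `Per_p(x)`: the set of positions where `x` is periodic with period `p`. -/
def PerSet {A : Type} (x : ℤ → A) (p : ℕ) : Set ℤ :=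
  {k | ∀ n : ℤ, x (k + n * (p : ℤ)) = x k}

/-- `p` is an essential period of `x`. -/
def IsEssentialPeriod {A : Type} (x : ℤ → A) (p : ℕ) : Prop :=
  0 < p ∧ ¬ ∃ q : ℕ, 0 < q ∧ q < p ∧
    ((fun k => k + (q : ℤ)) '' PerSet x p = PerSet x p) ∧
    (∀ k ∈ PerSet x p, x (k + (q : ℤ)) = x k)

/-- A period structure for a Toeplitz sequence `x`. -/
def IsPeriodStructure {A : Type} (x : ℤ → A) (p : ℕ → ℕ) : Prop :=
  StrictMono p ∧ (∀ k, IsEssentialPeriod x (p k)) ∧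
  (∀ k, p k ∣ p (k + 1)) ∧ (⋃ k, PerSet x (p k)) = Set.univ

/-- `x` is a (σ-)periodic sequence. -/
def IsPeriodicSeq {A : Type} (x : ℤ → A) : Prop :=
  ∃ n : ℕ, 0 < n ∧ ∀ m : ℤ, x (m + (n : ℤ)) = x m

/-- `z` is the bi-infinite concatenation of the `ψ`-images of the letters of `y`,
with `ψ(y₀)` beginning at coordinate `0`. -/
def IsConcat {B C : Type} (ψ : B → List C) (y : ℤ → B) (z : ℤ → C) : Prop :=
  ∃ s : ℤ → ℤ, s 0 = 0 ∧
    (∀ n : ℤ, s (n + 1) = s n + ((ψ (y n)).length : ℤ)) ∧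
    (∀ n : ℤ, ∀ j : Fin (ψ (y n)).length, z (s n + (j : ℕ)) = (ψ (y n)).get j)

/-- `p(x,n) = Σ_{i<n} p(Sⁱ x)`. -/
def psum {X : Type} (p : X → ℕ) (S : X → X) (x : X) (n : ℕ) : ℕ :=
  ∑ i ∈ Finset.range n, p (S^[i] x)


/-- The substitution χ(a) = aab, χ(b) = abb on {a, b} = Fin 2 (a = 0, b = 1). -/
def chi : Fin 2 → List (Fin 2) := fun i => if i = 0 then [0, 0, 1] else [0, 1, 1]

lemma chi_eq (c : Fin 2) : chi c = [0, c, 1] := by fin_cases c <;> rfl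

lemma substPow_succ_right {A : Type} (θ : A → List A) (k : ℕ) (a : A) :
    substPow θ (k+1) a = (substPow θ k a).flatMap θ := by
  induction k generalizing a with
  | zero => simp [substPow]
  | succ k ih =>
      show (θ a).flatMap (substPow θ (k+1)) = _
      calc (θ a).flatMap (substPow θ (k+1))
          = (θ a).flatMap (fun b => (substPow θ k b).flatMap θ) := by
            congr 1; funext b; exact ih b
        _ = ((θ a).flatMap (substPow θ k)).flatMap θ := by
            rw [List.flatMap_assoc]
        _ = (substPow θ (k+1) a).flatMap θ := rfl

lemma flat_len (L : List (Fin 2)) : (L.flatMap chi).length = 3 * L.length := by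
  induction L with
  | nil => simp
  | cons a L ih => simp [List.flatMap_cons, ih, chi_eq]; ring

lemma length_substPow (k : ℕ) (a : Fin 2) : (substPow chi k a).length = 3 ^ k := by
  induction k generalizing a with
  | zero => rfl
  | succ k ih => rw [substPow_succ_right, flat_len, ih, pow_succ, Nat.mul_comm]

lemma flat_get (L : List (Fin 2)) (j : ℕ) (hj : j < L.length) :
    (L.flatMap chi)[3*j]? = some 0 ∧ (L.flatMap chi)[3*j+1]? = L[j]? ∧
      (L.flatMap chi)[3*j+2]? = some 1 := by
  induction L generalizing j with
  | nil => simp at hj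
  | cons a L ih =>
      rw [List.flatMap_cons, chi_eq]
      cases j with
      | zero => simp
      | succ j =>
          have hj' : j < L.length := by simpa using hj
          have h3 : ∀ t : ℕ, ([0, a, 1] ++ L.flatMap chi)[3*(j+1)+t]? =
              (L.flatMap chi)[3*j+t]? := by
            intro t
            rw [List.getElem?_append_right (by simp; omega)]
            congr 1
            simp; omega
          refine ⟨?_, ?_, ?_⟩
          · rw [show 3*(j+1) = 3*(j+1)+0 by ring, h3, Nat.add_zero, (ih j hj').1]
          · rw [h3, (ih j hj').2.1]; simp
          · rw [h3, (ih j hj').2.2]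

lemma flat_mod0 (L : List (Fin 2)) (p : ℕ) (hp : p < 3 * L.length) (hm : p % 3 = 0) :
    (L.flatMap chi)[p]? = some 0 := by
  have : p = 3 * (p/3) := by omega
  rw [this]
  exact (flat_get L (p/3) (by omega)).1

lemma flat_mod2 (L : List (Fin 2)) (p : ℕ) (hp : p < 3 * L.length) (hm : p % 3 = 2) :
    (L.flatMap chi)[p]? = some 1 := by
  have : p = 3 * (p/3) + 2 := by omega
  rw [this]
  exact (flat_get L (p/3) (by omega)).2.2

lemma block_mod0 (k : ℕ) (a : Fin 2) (hk : 1 ≤ k) (p : ℕ) (hp : p < 3^k)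
    (hm : p % 3 = 0) : (substPow chi k a)[p]? = some 0 := by
  obtain ⟨k, rfl⟩ := Nat.exists_eq_add_of_le hk
  rw [Nat.add_comm, substPow_succ_right]
  exact flat_mod0 _ _ (by rw [length_substPow]; rw [pow_add, pow_one] at hp; omega) hm

lemma block_mod2 (k : ℕ) (a : Fin 2) (hk : 1 ≤ k) (p : ℕ) (hp : p < 3^k)
    (hm : p % 3 = 2) : (substPow chi k a)[p]? = some 1 := by
  obtain ⟨k, rfl⟩ := Nat.exists_eq_add_of_le hk
  rw [Nat.add_comm, substPow_succ_right]
  exact flat_mod2 _ _ (by rw [length_substPow]; rw [pow_add, pow_one] at hp; omega) hm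

lemma infix_getElem {A : Type} {u v : List A} (h : u.IsInfix v) :
    ∃ q : ℕ, q + u.length ≤ v.length ∧ ∀ j, j < u.length → v[q+j]? = u[j]? := by
  obtain ⟨l, r, rfl⟩ := h
  refine ⟨l.length, by simp, fun j hj => ?_⟩
  rw [List.append_assoc, List.getElem?_append_right (by omega),
    Nat.add_sub_cancel_left, List.getElem?_append_left hj]

lemma seqWord_len {A : Type} (x : ℤ → A) (i : ℤ) (n : ℕ) : (seqWord x i n).length = n := by
  simp [seqWord]

lemma seqWord_get {A : Type} (x : ℤ → A) (i : ℤ) (n : ℕ) (j : ℕ) (hj : j < n) :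
    (seqWord x i n)[j]? = some (x (i + j)) := by
  simp [seqWord, List.getElem?_ofFn, List.ofFnNthVal, hj]

lemma seqWord_append {A : Type} (x : ℤ → A) (i : ℤ) (m n : ℕ) :
    seqWord x i (m + n) = seqWord x i m ++ seqWord x (i + m) n := by
  apply List.ext_getElem?
  intro j
  rcases lt_or_ge j m with hj | hj
  · rw [List.getElem?_append_left (by rw [seqWord_len]; exact hj),
      seqWord_get _ _ _ _ (by omega), seqWord_get _ _ _ _ hj]
  · rw [List.getElem?_append_right (by rw [seqWord_len]; exact hj), seqWord_len]
    rcases lt_or_ge j (m + n) with hj2 | hj2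
    · rw [seqWord_get _ _ _ _ hj2, seqWord_get _ _ _ _ (by omega)]
      congr 2
      push_cast [Nat.cast_sub hj]
      ring
    · rw [List.getElem?_eq_none (by rw [seqWord_len]; omega),
        List.getElem?_eq_none (by rw [seqWord_len]; omega)]

lemma seqWord_one {A : Type} (x : ℤ → A) (i : ℤ) : seqWord x i 1 = [x i] := by
  simp [seqWord, List.ofFn_succ]

lemma seqWord_succ {A : Type} (x : ℤ → A) (i : ℤ) (n : ℕ) :
    seqWord x i (n + 1) = seqWord x i n ++ [x (i + n)] := by
  rw [seqWord_append, seqWord_one]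

lemma seqWord_three {A : Type} (x : ℤ → A) (i : ℤ) :
    seqWord x i 3 = [x i, x (i+1), x (i+2)] := by
  show seqWord x i (2+1) = _
  rw [seqWord_succ]
  show seqWord x i (1+1) ++ _ = _
  rw [seqWord_succ, seqWord_one]
  norm_num

lemma seqWord_infix_of_le {A : Type} (x : ℤ → A) {i i0 : ℤ} {n n0 : ℕ}
    (h1 : i0 ≤ i) (h2 : i + n ≤ i0 + n0) :
    (seqWord x i n).IsInfix (seqWord x i0 n0) := by
  have ha : (0:ℤ) ≤ i - i0 := by omega
  set a := (i - i0).toNat with hadef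
  have haa : (a : ℤ) = i - i0 := Int.toNat_of_nonneg ha
  have hb : a + n ≤ n0 := by omega
  set b := n0 - (a + n) with hbdef
  have : n0 = a + (n + b) := by omega
  rw [this, seqWord_append, seqWord_append]
  have : i0 + a = i := by omega
  rw [this]
  exact ⟨seqWord x i0 a, seqWord x (i + n) b, by simp⟩

lemma two_infix (w : List (Fin 2)) (h : w.length ≤ 2) :
    w.IsInfix (substPow chi 2 0) := by
  have : substPow chi 2 0 = [0,0,1,0,0,1,0,1,1] := rfl
  rw [this]
  match w, h with
  | [], _ => exact List.nil_infix
  | [a], _ => fin_cases a <;> decide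
  | [a, b], _ => fin_cases a <;> fin_cases b <;> decide

def pointOf (τ : ℕ → ℤ) (β : Fin 2) : ℤ → Fin 2 := fun n =>
  if h : ∃ k, ¬ ((3:ℤ)^(k+1) ∣ (n - τ (k+1))) then
    (if (3:ℤ)^(Nat.find h + 1) ∣ (n - τ (Nat.find h + 1) + 3^(Nat.find h)) then 0 else 1)
  else β

def Coh (τ : ℕ → ℤ) : Prop := ∀ k, (3:ℤ)^k ∣ τ (k+1) - τ k

lemma coh_dvd {τ : ℕ → ℤ} (h : Coh τ) {j k : ℕ} (hjk : j ≤ k) :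
    (3:ℤ)^j ∣ τ k - τ j := by
  induction k with
  | zero => simp_all
  | succ k ih =>
      rcases Nat.lt_or_ge j (k+1) with hj | hj
      · have h1 : (3:ℤ)^j ∣ τ k - τ j := ih (by omega)
        have h2 : (3:ℤ)^j ∣ τ (k+1) - τ k :=
          dvd_trans (pow_dvd_pow 3 (by omega)) (h k)
        have := dvd_add h2 h1
        simpa using this
      · have : j = k + 1 := by omega
        subst this; simp

lemma pointOf_resolve (τ : ℕ → ℤ) (β : Fin 2) (n : ℤ) (k₀ : ℕ)
    (hmin : ∀ j, j < k₀ → (3:ℤ)^(j+1) ∣ (n - τ (j+1)))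
    (hk : ¬ (3:ℤ)^(k₀+1) ∣ (n - τ (k₀+1))) :
    pointOf τ β n = if (3:ℤ)^(k₀+1) ∣ (n - τ (k₀+1) + 3^k₀) then 0 else 1 := by
  have h : ∃ k, ¬ ((3:ℤ)^(k+1) ∣ (n - τ (k+1))) := ⟨k₀, hk⟩
  have hfind : Nat.find h = k₀ := by
    rw [Nat.find_eq_iff]
    exact ⟨hk, fun j hj => by simpa using hmin j hj⟩
  rw [pointOf, dif_pos h, hfind]

lemma pointOf_sing (τ : ℕ → ℤ) (β : Fin 2) (n : ℤ)
    (hall : ∀ k, (3:ℤ)^(k+1) ∣ (n - τ (k+1))) : pointOf τ β n = β := by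
  rw [pointOf, dif_neg]
  push_neg
  exact hall

lemma pointOf_zero (τ : ℕ → ℤ) (β : Fin 2) (n : ℤ) (h3 : (3:ℤ) ∣ n - τ 1 + 1) :
    pointOf τ β n = 0 := by
  have hnd : ¬ (3:ℤ)^(0+1) ∣ (n - τ (0+1)) := by
    simp only [pow_one, zero_add]
    intro hd
    have : (3:ℤ) ∣ 1 := by
      have := dvd_sub h3 hd
      simpa using this
    norm_num at this
  rw [pointOf_resolve τ β n 0 (by omega) hnd, if_pos (by simpa using h3)]

lemma pointOf_one (τ : ℕ → ℤ) (β : Fin 2) (n : ℤ) (h3 : (3:ℤ) ∣ n - τ 1 - 1) :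
    pointOf τ β n = 1 := by
  have hnd : ¬ (3:ℤ)^(0+1) ∣ (n - τ (0+1)) := by
    simp only [pow_one, zero_add]
    intro hd
    have : (3:ℤ) ∣ 1 := by
      have := dvd_sub hd h3
      simpa using this
    norm_num at this
  rw [pointOf_resolve τ β n 0 (by omega) hnd, if_neg]
  simp only [pow_zero, zero_add]
  intro hd
  have hd3 : (3:ℤ) ∣ n - τ 1 + 1 := dvd_trans (by norm_num) hd
  have : (3:ℤ) ∣ 2 := by
    have := dvd_sub hd3 h3
    simpa using this
  norm_num at this

def derTau (τ : ℕ → ℤ) : ℕ → ℤ := fun k => (τ (k+1) - τ 1) / 3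

lemma derTau_spec {τ : ℕ → ℤ} (h : Coh τ) (k : ℕ) :
    3 * derTau τ k = τ (k+1) - τ 1 := by
  apply Int.mul_ediv_cancel'
  have := coh_dvd h (show 1 ≤ k + 1 by omega)
  simpa using this

lemma coh_derTau {τ : ℕ → ℤ} (h : Coh τ) : Coh (derTau τ) := by
  intro k
  have h1 : (3:ℤ) * (derTau τ (k+1) - derTau τ k) = τ (k+2) - τ (k+1) := by
    rw [mul_sub, derTau_spec h, derTau_spec h]; ring
  have h2 : (3:ℤ)^(k+1) ∣ 3 * (derTau τ (k+1) - derTau τ k) := by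
    rw [h1]; exact h (k+1)
  rw [pow_succ, mul_comm] at h2
  exact (mul_dvd_mul_iff_left (by norm_num : (3:ℤ) ≠ 0)).mp h2

lemma pointOf_mid {τ : ℕ → ℤ} (h : Coh τ) (β : Fin 2) (m : ℤ) :
    pointOf τ β (3*m + τ 1) = pointOf (derTau τ) β m := by
  set n := 3*m + τ 1 with hn
  have key : ∀ j : ℕ, n - τ (j+1) = 3 * (m - derTau τ j) := by
    intro j
    rw [mul_sub, derTau_spec h]; ring
  have keyiff : ∀ j : ℕ, ((3:ℤ)^(j+2) ∣ (n - τ (j+2))) ↔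
      ((3:ℤ)^(j+1) ∣ (m - derTau τ (j+1))) := by
    intro j
    rw [show (j+2) = (j+1)+1 by ring, key (j+1), pow_succ, mul_comm ((3:ℤ)^(j+1)) 3]
    exact mul_dvd_mul_iff_left (by norm_num : (3:ℤ) ≠ 0)
  have key0 : (3:ℤ)^(0+1) ∣ (n - τ (0+1)) := by
    rw [key 0]
    simpa using dvd_mul_right (3:ℤ) (m - derTau τ 0)
  by_cases hQ : ∃ j, ¬ ((3:ℤ)^(j+1) ∣ (m - derTau τ (j+1)))
  · set j₀ := Nat.find hQ with hj0def
    have hj₀ : ¬ ((3:ℤ)^(j₀+1) ∣ (m - derTau τ (j₀+1))) := Nat.find_spec hQ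
    have hmin' : ∀ j, j < j₀ → (3:ℤ)^(j+1) ∣ (m - derTau τ (j+1)) := by
      intro j hj
      have := Nat.find_min hQ hj
      simpa using this
    have hminn : ∀ j, j < j₀ + 1 → (3:ℤ)^(j+1) ∣ (n - τ (j+1)) := by
      intro j hj
      cases j with
      | zero => exact key0
      | succ i => exact (keyiff i).mpr (hmin' i (by omega))
    have hkn : ¬ (3:ℤ)^(j₀+1+1) ∣ (n - τ (j₀+1+1)) := by
      intro hd
      exact hj₀ ((keyiff j₀).mp hd)
    rw [pointOf_resolve (derTau τ) β m j₀ hmin' hj₀,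
        pointOf_resolve τ β n (j₀+1) hminn hkn]
    have hval : ((3:ℤ)^(j₀+1+1) ∣ (n - τ (j₀+1+1) + 3^(j₀+1))) ↔
        ((3:ℤ)^(j₀+1) ∣ (m - derTau τ (j₀+1) + 3^j₀)) := by
      have he : n - τ (j₀+1+1) + 3^(j₀+1) = 3 * (m - derTau τ (j₀+1) + 3^j₀) := by
        rw [key (j₀+1)]; ring
      rw [he, pow_succ, mul_comm ((3:ℤ)^(j₀+1)) 3]
      exact mul_dvd_mul_iff_left (by norm_num : (3:ℤ) ≠ 0)
    rw [if_congr hval rfl rfl]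
  · push_neg at hQ
    rw [pointOf_sing _ _ _ hQ]
    apply pointOf_sing
    intro k
    cases k with
    | zero => exact key0
    | succ j => exact (keyiff j).mpr (hQ j)

lemma flat_infix {u v : List (Fin 2)} (h : u.IsInfix v) :
    (u.flatMap chi).IsInfix (v.flatMap chi) := by
  obtain ⟨l, r, rfl⟩ := h
  exact ⟨l.flatMap chi, r.flatMap chi, by simp [List.flatMap_append]⟩

lemma seqWord_flat (y y' : ℤ → Fin 2) (c : ℤ)
    (h0 : ∀ m : ℤ, y (3*m + c) = 0) (h1 : ∀ m : ℤ, y (3*m + c + 1) = y' m)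
    (h2 : ∀ m : ℤ, y (3*m + c + 2) = 1) (a : ℤ) (L : ℕ) :
    seqWord y (3*a + c) (3*L) = (seqWord y' a L).flatMap chi := by
  induction L with
  | zero => simp [seqWord]
  | succ L ih =>
      rw [show 3*(L+1) = 3*L + 3 by ring, seqWord_append,
        show L + 1 = L + 1 by rfl, seqWord_append y' a L 1, List.flatMap_append, ← ih]
      congr 1
      have he : 3*a + c + (3*L : ℕ) = 3*(a + L) + c := by push_cast; ring
      rw [he, seqWord_three]
      have g0 := h0 (a + L)
      have g1 := h1 (a + L)
      have g2 := h2 (a + L)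
      rw [show (3*(a+L)+c) + 1 = 3*(a+L)+c+1 by ring] at *
      rw [g0, show (3*(a+L)+c) + 2 = 3*(a+L)+c+2 by ring, g2, g1]
      have : seqWord y' (a + L) 1 = [y' (a + L)] := by
        rw [show (1:ℕ) = 0 + 1 by rfl, seqWord_append]
        simp [seqWord]
      rw [show a + (L:ℤ) = a + L by rfl, this]
      simp [chi_eq]

lemma goodx_word : ∀ n : ℕ, ∀ τ : ℕ → ℤ, ∀ β : Fin 2, ∀ i : ℤ, Coh τ →
    ∃ k a, (seqWord (pointOf τ β) i n).IsInfix (substPow chi k a) := by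
  intro n
  induction n using Nat.strong_induction_on with
  | _ n ih =>
    intro τ β i hτ
    rcases le_or_gt n 2 with hn | hn
    · exact ⟨2, 0, two_infix _ (by rw [seqWord_len]; exact hn)⟩
    · set y := pointOf τ β with hy
      set c : ℤ := τ 1 - 1 with hc
      set a : ℤ := (i - c) / 3 with ha
      have key : 3 * a + (i - c) % 3 = i - c := Int.mul_ediv_add_emod _ 3
      have hm0 : 0 ≤ (i - c) % 3 := Int.emod_nonneg _ (by norm_num)
      have hm3 : (i - c) % 3 < 3 := Int.emod_lt_of_pos _ (by norm_num)
      set L : ℕ := (n + 4) / 3 with hL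
      have h3L : n + 2 ≤ 3 * L := by omega
      have hLn : L < n := by omega
      have hcov : (seqWord y i n).IsInfix (seqWord y (3*a + c) (3*L)) :=
        seqWord_infix_of_le y (by omega) (by push_cast; omega)
      have h0 : ∀ m:ℤ, y (3*m + c) = 0 := fun m =>
        pointOf_zero τ β _ ⟨m, by rw [hc]; ring⟩
      have h1 : ∀ m:ℤ, y (3*m + c + 1) = pointOf (derTau τ) β m := fun m => by
        rw [show 3*m + c + 1 = 3*m + τ 1 by rw [hc]; ring, hy]
        exact pointOf_mid hτ β m
      have h2 : ∀ m:ℤ, y (3*m + c + 2) = 1 := fun m =>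
        pointOf_one τ β _ ⟨m, by rw [hc]; ring⟩
      have hflat := seqWord_flat y (pointOf (derTau τ) β) c h0 h1 h2 a L
      obtain ⟨k, aa, hinf⟩ := ih L hLn (derTau τ) β a (coh_derTau hτ)
      refine ⟨k+1, aa, ?_⟩
      rw [substPow_succ_right]
      exact hcov.trans (by rw [hflat]; exact flat_infix hinf)

theorem goodx (τ : ℕ → ℤ) (β : Fin 2) (h : Coh τ) : pointOf τ β ∈ substShift chi :=
  fun i n => goodx_word n τ β i h

lemma align (v L : List (Fin 2)) (h : (v.flatMap chi).IsInfix (L.flatMap chi)) :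
    v.IsInfix L := by
  by_cases hv : v = []
  · subst hv; exact List.nil_infix
  have hvl : 0 < v.length := List.length_pos_iff.mpr hv
  obtain ⟨q, hle, hget⟩ := infix_getElem h
  rw [flat_len] at hget
  rw [flat_len, flat_len] at hle
  have w0 : (L.flatMap chi)[q+0]? = some 0 := by
    rw [hget 0 (by omega), flat_mod0 v 0 (by omega) (by omega)]
  have w2 : (L.flatMap chi)[q+2]? = some 1 := by
    rw [hget 2 (by omega), flat_mod2 v 2 (by omega) (by omega)]
  have hq3 : q % 3 = 0 := by
    rcases (by omega : q % 3 = 0 ∨ q % 3 = 1 ∨ q % 3 = 2) with hm|hm|hm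
    · exact hm
    · exfalso
      have := flat_mod0 L (q+2) (by omega) (by omega)
      rw [w2] at this
      simp at this
    · exfalso
      have := flat_mod2 L (q+0) (by omega) (by omega)
      rw [w0] at this
      simp at this
  set s : ℕ := q / 3 with hs
  have hsv : s + v.length ≤ L.length := by omega
  have hvget : ∀ j, j < v.length → v[j]? = L[s+j]? := by
    intro j hj
    have e1 : (v.flatMap chi)[3*j+1]? = v[j]? := (flat_get v j hj).2.1
    have e2 := hget (3*j+1) (by omega)
    have e3 : q + (3*j+1) = 3*(s+j)+1 := by omega
    rw [e3] at e2
    rw [← e1, ← e2, (flat_get L (s+j) (by omega)).2.1]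
  have hveq : v = (L.drop s).take v.length := by
    apply List.ext_getElem?
    intro j
    rcases lt_or_ge j v.length with hj | hj
    · rw [hvget j hj, List.getElem?_take_of_lt hj, List.getElem?_drop]
    · rw [List.getElem?_eq_none hj, List.getElem?_eq_none]
      rw [List.length_take, List.length_drop]
      omega
  rw [hveq]
  exact ((List.take_prefix _ _).isInfix).trans ((List.drop_suffix _ _).isInfix)

lemma mem_val {x : ℤ → Fin 2} (hx : x ∈ substShift chi) (i : ℤ) (n : ℕ) (hn : 2 ≤ n) :
    ∃ (k : ℕ) (a : Fin 2) (q : ℕ), 1 ≤ k ∧ q + n ≤ 3^k ∧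
      ∀ j : ℕ, j < n → (substPow chi k a)[q+j]? = some (x (i + j)) := by
  obtain ⟨k, a, hinf⟩ := hx i n
  obtain ⟨q, hle, hget⟩ := infix_getElem hinf
  rw [seqWord_len] at hle hget
  rw [length_substPow] at hle
  have hk : 1 ≤ k := by
    by_contra hk
    have : k = 0 := by omega
    subst this
    simp at hle
    omega
  exact ⟨k, a, q, hk, hle, fun j hj => by rw [hget j hj, seqWord_get x i n j hj]⟩

lemma cut_exists {x : ℤ → Fin 2} (hx : x ∈ substShift chi) :
    ∃ c : ℤ, (∀ m : ℤ, x (3*m + c) = 0) ∧ (∀ m : ℤ, x (3*m + c + 2) = 1) := by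
  obtain ⟨k, a, q, hk, hle, hget⟩ := mem_val hx 0 5 (by norm_num)
  set t : ℕ := (5 - q % 3) % 3 with ht
  have htm : (q + t) % 3 = 2 := by omega
  have h1 : (substPow chi k a)[q+t]? = some 1 := block_mod2 k a hk _ (by omega) htm
  have h0 : (substPow chi k a)[q+(t+1)]? = some 0 :=
    block_mod0 k a hk _ (by omega) (by omega)
  have hx1 : x t = 1 := by
    have := hget t (by omega)
    rw [h1] at this
    simpa using this.symm
  have hx0 : x ((t:ℤ) + 1) = 0 := by
    have := hget (t+1) (by omega)
    rw [h0] at this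
    rw [show ((0:ℤ) + ((t:ℕ)+1:ℕ)) = (t:ℤ)+1 by push_cast; ring] at this
    simpa using this.symm
  have main : ∀ m : ℤ, x (t + 3*m) = 1 ∧ x (t + 3*m + 1) = 0 := by
    intro m
    set M : ℕ := m.natAbs with hM
    obtain ⟨k, a, q, hk, hle, hget⟩ := mem_val hx ((t:ℤ) - 3*M) (6*M + 2) (by omega)
    have g1 : (substPow chi k a)[q+3*M]? = some 1 := by
      rw [hget (3*M) (by omega), show ((t:ℤ) - 3*M + ((3*M:ℕ):ℤ)) = (t:ℤ) by push_cast; ring, hx1]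
    have g0 : (substPow chi k a)[q+(3*M+1)]? = some 0 := by
      rw [hget (3*M+1) (by omega), show ((t:ℤ) - 3*M + ((3*M+1:ℕ):ℤ)) = (t:ℤ)+1 by push_cast; ring, hx0]
    have hq2 : (q + 3*M) % 3 = 2 := by
      rcases (by omega : (q+3*M) % 3 = 0 ∨ (q+3*M) % 3 = 1 ∨ (q+3*M) % 3 = 2) with hm|hm|hm
      · exfalso
        have := block_mod0 k a hk (q+3*M) (by omega) hm
        rw [g1] at this
        simp at this
      · exfalso
        have := block_mod2 k a hk (q+(3*M+1)) (by omega) (by omega)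
        rw [g0] at this
        simp at this
      · exact hm
    have hj2 : (0:ℤ) ≤ 3*(M:ℤ) + 3*m := by omega
    set j2 : ℕ := (3*(M:ℤ) + 3*m).toNat with hj2d
    have hj2' : (j2:ℤ) = 3*(M:ℤ) + 3*m := Int.toNat_of_nonneg hj2
    have hj2b : j2 + 1 < 6*M + 2 := by omega
    have hmod : (q + j2) % 3 = 2 := by omega
    have e2 : (t:ℤ) - 3*M + (j2:ℕ) = (t:ℤ) + 3*m := by rw [hj2']; ring
    constructor
    · have hv := block_mod2 k a hk (q+j2) (by omega) hmod
      have := hget j2 (by omega)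
      rw [hv, e2] at this
      simpa using this.symm
    · have hv := block_mod0 k a hk (q+(j2+1)) (by omega) (by omega)
      have := hget (j2+1) (by omega)
      rw [hv, show ((t:ℤ) - 3*M + ((j2+1:ℕ):ℤ)) = (t:ℤ) + 3*m + 1 by push_cast [hj2']; ring] at this
      simpa using this.symm
  refine ⟨(t:ℤ) + 1, fun m => ?_, fun m => ?_⟩
  · rw [show 3*m + ((t:ℤ)+1) = (t:ℤ) + 3*m + 1 by ring]
    exact (main m).2
  · rw [show 3*m + ((t:ℤ)+1) + 2 = (t:ℤ) + 3*(m+1) by ring]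
    exact (main (m+1)).1

lemma derived_mem {x : ℤ → Fin 2} (hx : x ∈ substShift chi) {c : ℤ}
    (hc0 : ∀ m : ℤ, x (3*m + c) = 0) (hc2 : ∀ m : ℤ, x (3*m + c + 2) = 1) :
    (fun m => x (3*m + c + 1)) ∈ substShift chi := by
  intro i n
  have hflat := seqWord_flat x (fun m => x (3*m+c+1)) c hc0 (fun m => rfl) hc2 i n
  obtain ⟨k, a, hinf⟩ := hx (3*i + c) (3*n)
  rw [hflat] at hinf
  rcases Nat.eq_zero_or_pos n with rfl | hn
  · exact ⟨0, a, by simp [seqWord, List.nil_infix]⟩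
  rcases Nat.eq_zero_or_pos k with rfl | hk
  · exfalso
    have h1 := hinf.length_le
    rw [flat_len, seqWord_len] at h1
    simp [substPow] at h1
    omega
  obtain ⟨k, rfl⟩ := Nat.exists_eq_add_of_le hk
  rw [Nat.add_comm, substPow_succ_right] at hinf
  exact ⟨k, a, align _ _ hinf⟩

lemma dvd_all_eq_zero {z : ℤ} (h : ∀ k:ℕ, (3:ℤ)^k ∣ z) : z = 0 := by
  by_contra hz
  have h2 : (3:ℤ)^(z.natAbs) ≤ |z| :=
    Int.le_of_dvd (abs_pos.mpr hz) ((dvd_abs _ _).mpr (h _))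
  have h3 : ((z.natAbs : ℕ) : ℤ) < (3:ℤ)^(z.natAbs) := by
    have := Nat.lt_pow_self (n := z.natAbs) (show 1 < 3 by norm_num)
    exact_mod_cast this
  rw [Int.abs_eq_natAbs] at h2
  linarith

def cutFn (x : ℤ → Fin 2) : ℤ :=
  if h : x ∈ substShift chi then Classical.choose (cut_exists h) else 0

lemma cutFn_spec {x : ℤ → Fin 2} (hx : x ∈ substShift chi) :
    (∀ m : ℤ, x (3*m + cutFn x) = 0) ∧ (∀ m : ℤ, x (3*m + cutFn x + 2) = 1) := by
  rw [cutFn, dif_pos hx]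
  exact Classical.choose_spec (cut_exists hx)

def derX (x : ℤ → Fin 2) : ℤ → Fin 2 := fun m => x (3*m + cutFn x + 1)

def seqX (x : ℤ → Fin 2) : ℕ → (ℤ → Fin 2)
  | 0 => x
  | k+1 => derX (seqX x k)

lemma seqX_mem {x : ℤ → Fin 2} (hx : x ∈ substShift chi) (k : ℕ) :
    seqX x k ∈ substShift chi := by
  induction k with
  | zero => exact hx
  | succ k ih => exact derived_mem ih (cutFn_spec ih).1 (cutFn_spec ih).2

def tauX (x : ℤ → Fin 2) : ℕ → ℤ
  | 0 => 0
  | k+1 => tauX x k + 3^k * (cutFn (seqX x k) + 1)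

lemma coh_tauX (x : ℤ → Fin 2) : Coh (tauX x) := fun k =>
  ⟨cutFn (seqX x k) + 1, by simp [tauX]⟩

lemma seqX_abs (x : ℤ → Fin 2) : ∀ k : ℕ, ∀ m : ℤ,
    x (3^k * m + tauX x k) = seqX x k m := by
  intro k
  induction k with
  | zero => intro m; simp [tauX, seqX]
  | succ k ih =>
      intro m
      show x (3^(k+1) * m + tauX x (k+1)) = seqX x k (3*m + cutFn (seqX x k) + 1)
      rw [← ih (3*m + cutFn (seqX x k) + 1)]
      congr 1
      show (3:ℤ)^(k+1) * m + (tauX x k + 3^k * (cutFn (seqX x k) + 1)) = _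
      ring

theorem structure_thm {x : ℤ → Fin 2} (hx : x ∈ substShift chi) :
    ∃ τ β, Coh τ ∧ x = pointOf τ β := by
  set τ := tauX x with hτdef
  set β : Fin 2 :=
    (if h : ∃ n₀ : ℤ, ∀ k : ℕ, (3:ℤ)^k ∣ (n₀ - τ k) then x (Classical.choose h) else 0)
    with hβdef
  refine ⟨τ, β, coh_tauX x, ?_⟩
  funext n
  by_cases h : ∃ k, ¬ ((3:ℤ)^(k+1) ∣ (n - τ (k+1)))
  · set k₀ := Nat.find h with hk₀def
    have hk₀ : ¬ (3:ℤ)^(k₀+1) ∣ (n - τ (k₀+1)) := Nat.find_spec h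
    have hmin : ∀ j, j < k₀ → (3:ℤ)^(j+1) ∣ (n - τ (j+1)) := fun j hj =>
      not_not.mp (Nat.find_min h hj)
    rw [pointOf_resolve τ β n k₀ hmin hk₀]
    have hdvd : (3:ℤ)^k₀ ∣ n - τ k₀ := by
      rcases Nat.eq_zero_or_pos k₀ with h0 | h0
      · rw [h0]; simpa using one_dvd (n - τ 0)
      · have := hmin (k₀ - 1) (by omega)
        rwa [Nat.sub_add_cancel h0] at this
    obtain ⟨m, hm⟩ := hdvd
    have habs : x n = seqX x k₀ m := by
      rw [← seqX_abs x k₀ m]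
      congr 1
      linarith
    set c := cutFn (seqX x k₀) with hcdef
    have hcut := cutFn_spec (seqX_mem hx k₀)
    have hτ1 : τ (k₀+1) = τ k₀ + 3^k₀ * (c + 1) := rfl
    have hkey : n - τ (k₀+1) = 3^k₀ * (m - c - 1) := by
      rw [hτ1]; linear_combination hm
    have hkey2 : n - τ (k₀+1) + 3^k₀ = 3^k₀ * (m - c) := by
      rw [hkey]; ring
    have h3 : ¬ (3:ℤ) ∣ (m - c - 1) := by
      rintro ⟨d, hd⟩
      apply hk₀
      refine ⟨d, ?_⟩
      rw [hkey, hd, pow_succ]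
      ring
    have hcase : (m - c) % 3 = 0 ∨ (m - c) % 3 = 2 := by omega
    rcases hcase with hr | hr
    · obtain ⟨t, ht⟩ : (3:ℤ) ∣ (m - c) := by omega
      have hval : x n = 0 := by
        rw [habs, show m = 3*t + c by linarith]
        exact hcut.1 t
      rw [hval, if_pos ⟨t, by rw [hkey2, ht, pow_succ]; ring⟩]
    · obtain ⟨t, ht⟩ : (3:ℤ) ∣ (m - c - 2) := by omega
      have hval : x n = 1 := by
        rw [habs, show m = 3*t + c + 2 by linarith]
        exact hcut.2 t
      rw [hval, if_neg]
      rintro ⟨d, hd⟩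
      rw [hkey2, pow_succ, mul_assoc] at hd
      have h9 : (3:ℤ)^k₀ ≠ 0 := pow_ne_zero _ (by norm_num)
      have : m - c = 3 * d := mul_left_cancel₀ h9 hd
      omega
  · push_neg at h
    rw [pointOf_sing τ β n h]
    have hex : ∃ n₀ : ℤ, ∀ k : ℕ, (3:ℤ)^k ∣ (n₀ - τ k) := by
      refine ⟨n, fun k => ?_⟩
      cases k with
      | zero => simpa using one_dvd (n - τ 0)
      | succ j => exact h j
    rw [hβdef, dif_pos hex]
    set n₀ := Classical.choose hex with hn₀
    have hspec := Classical.choose_spec hex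
    have : n = n₀ := by
      have hz : n - n₀ = 0 := by
        apply dvd_all_eq_zero
        intro k
        have h1 : (3:ℤ)^k ∣ (n - τ k) := by
          cases k with
          | zero => simpa using one_dvd (n - τ 0)
          | succ j => exact h j
        have h2 := hspec k
        have := dvd_sub h1 h2
        simpa using this
      omega
    rw [this]

def tauInv (τ : ℕ → ℤ) : ℕ → ℤ
  | 0 => 0
  | k+1 => tauInv τ k - 3^k * ((7 * tauInv τ k - τ (k+1) - 3) / 3^k)

lemma coh_tauInv (τ : ℕ → ℤ) : Coh (tauInv τ) := fun k => by
  show (3:ℤ)^k ∣ (tauInv τ k - 3^k * ((7 * tauInv τ k - τ (k+1) - 3) / 3^k)) - tauInv τ k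
  exact ⟨-((7 * tauInv τ k - τ (k+1) - 3) / 3^k), by ring⟩

lemma tauInv_spec {τ : ℕ → ℤ} (h : Coh τ) :
    ∀ k, (3:ℤ)^k ∣ 7 * tauInv τ k - (τ k + 3) := by
  intro k
  induction k with
  | zero => simpa using one_dvd _
  | succ k ih =>
      have hg : (3:ℤ)^k ∣ 7 * tauInv τ k - τ (k+1) - 3 := by
        have h2 := h k
        have := dvd_sub ih h2
        have he : 7 * tauInv τ k - (τ k + 3) - (τ (k+1) - τ k) =
            7 * tauInv τ k - τ (k+1) - 3 := by ring
        rwa [he] at this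
      have hge : (3:ℤ)^k * ((7 * tauInv τ k - τ (k+1) - 3) / 3^k) =
          7 * tauInv τ k - τ (k+1) - 3 := Int.mul_ediv_cancel' hg
      show (3:ℤ)^(k+1) ∣
        7 * (tauInv τ k - 3^k * ((7 * tauInv τ k - τ (k+1) - 3) / 3^k)) - (τ (k+1) + 3)
      refine ⟨-2 * ((7 * tauInv τ k - τ (k+1) - 3) / 3^k), ?_⟩
      rw [pow_succ]
      linear_combination (-1 : ℤ) * hge

lemma cop_pow (k : ℕ) : IsCoprime ((3:ℤ)^k) 7 := by
  apply IsCoprime.pow_left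
  rw [Int.isCoprime_iff_gcd_eq_one]
  decide

lemma grand {τ σ : ℕ → ℤ} (hτ : Coh τ) (hσ : Coh σ)
    (hch : ∀ k, (3:ℤ)^k ∣ 7 * σ k - (τ k + 3)) (β : Fin 2) (n : ℤ) :
    pointOf τ β (7*n - 3) = pointOf σ β n := by
  have iff1 : ∀ k : ℕ, ((3:ℤ)^(k+1) ∣ (7*n - 3 - τ (k+1))) ↔
      ((3:ℤ)^(k+1) ∣ (n - σ (k+1))) := by
    intro k
    have he : 7*n - 3 - τ (k+1) = 7*(n - σ (k+1)) + (7 * σ (k+1) - (τ (k+1) + 3)) := by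
      ring
    constructor
    · intro hd
      have h7 : (3:ℤ)^(k+1) ∣ 7 * (n - σ (k+1)) := by
        have := dvd_sub hd (hch (k+1))
        rw [he] at this
        simpa using this
      exact (cop_pow (k+1)).dvd_of_dvd_mul_left h7
    · intro hd
      rw [he]
      exact dvd_add (Dvd.dvd.mul_left hd 7) (hch (k+1))
  have iff2 : ∀ k : ℕ, ((3:ℤ)^(k+1) ∣ (7*n - 3 - τ (k+1) + 3^k)) ↔
      ((3:ℤ)^(k+1) ∣ (n - σ (k+1) + 3^k)) := by
    intro k
    have he : 7*(n - σ (k+1) + 3^k) =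
        (7*n - 3 - τ (k+1) + 3^k) + (7 * σ (k+1) - (τ (k+1) + 3)) * (-1) + 2*(3^(k+1)) := by
      rw [pow_succ]; ring
    constructor
    · intro hd
      have h7 : (3:ℤ)^(k+1) ∣ 7 * (n - σ (k+1) + 3^k) := by
        rw [he]
        exact dvd_add (dvd_add hd ((hch (k+1)).mul_right _)) (Dvd.dvd.mul_left dvd_rfl 2)
      exact (cop_pow (k+1)).dvd_of_dvd_mul_left h7
    · intro hd
      have h7 : (3:ℤ)^(k+1) ∣ 7*(n - σ (k+1) + 3^k) := Dvd.dvd.mul_left hd 7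
      rw [he] at h7
      have := dvd_sub (dvd_sub h7 (Dvd.dvd.mul_left dvd_rfl 2)) ((hch (k+1)).mul_right (-1))
      simpa using this
  by_cases h : ∃ k, ¬ ((3:ℤ)^(k+1) ∣ (n - σ (k+1)))
  · set k₀ := Nat.find h with hk₀def
    have hk₀ : ¬ (3:ℤ)^(k₀+1) ∣ (n - σ (k₀+1)) := Nat.find_spec h
    have hmin : ∀ j, j < k₀ → (3:ℤ)^(j+1) ∣ (n - σ (j+1)) := fun j hj =>
      not_not.mp (Nat.find_min h hj)
    rw [pointOf_resolve σ β n k₀ hmin hk₀,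
      pointOf_resolve τ β (7*n-3) k₀ (fun j hj => (iff1 j).mpr (hmin j hj))
        (fun hd => hk₀ ((iff1 k₀).mp hd))]
    rw [if_congr (iff2 k₀) rfl rfl]
  · push_neg at h
    rw [pointOf_sing σ β n h, pointOf_sing τ β (7*n-3) (fun k => (iff1 k).mpr (h k))]

lemma shiftMap_iterate {A : Type} (m : ℕ) (x : ℤ → A) (n : ℤ) :
    (shiftMap^[m] x) n = x (n + m) := by
  induction m generalizing x n with
  | zero => simp
  | succ m ih =>
      rw [Function.iterate_succ_apply, ih]
      show x (n + m + 1) = x (n + (m+1))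
      congr 1
      push_cast
      ring

/-- (X_χ, σ^1) is a topological factor of (X_χ, σ^7). -/
theorem statement16 :
    IsFactorOn (substShift chi) (shiftMap^[7]) (substShift chi) (shiftMap^[1]) := by
  refine ⟨fun x n => x (7*n - 3), ?_, ?_, ?_, ?_⟩
  · intro x hx
    obtain ⟨τ, β, hτ, hxe⟩ := structure_thm hx
    have heq : (fun n => x (7*n - 3)) = pointOf (tauInv τ) β := by
      funext n
      rw [hxe]
      exact grand hτ (coh_tauInv τ) (tauInv_spec hτ) β n
    show (fun n => x (7*n - 3)) ∈ substShift chi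
    rw [heq]
    exact goodx _ _ (coh_tauInv τ)
  · exact (continuous_pi fun n => continuous_apply (7*n - 3)).continuousOn
  · intro y hy
    obtain ⟨υ, γ, hυ, hye⟩ := structure_thm hy
    have hcoh : Coh (fun k => 7 * υ k - 3) := fun k => by
      show (3:ℤ)^k ∣ (7 * υ (k+1) - 3) - (7 * υ k - 3)
      have h1 := (hυ k).mul_left 7
      have he : (7 * υ (k+1) - 3) - (7 * υ k - 3) = 7 * (υ (k+1) - υ k) := by ring
      rw [he]
      exact h1
    refine ⟨pointOf (fun k => 7 * υ k - 3) γ, goodx _ _ hcoh, ?_⟩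
    rw [hye]
    funext n
    show pointOf (fun k => 7 * υ k - 3) γ (7*n - 3) = pointOf υ γ n
    exact grand hcoh hυ (fun k => ⟨0, by ring⟩) γ n
  · intro x _
    funext n
    show (shiftMap^[7] x) (7*n - 3) = (shiftMap^[1] (fun n => x (7*n - 3))) n
    rw [shiftMap_iterate 7 x (7*n-3), shiftMap_iterate 1 (fun n => x (7*n - 3)) n]
    show x (7*n - 3 + 7) = x (7*(n + (1:ℕ)) - 3)
    congr 1
    push_cast
    ring


end
end

section
/- Let χ be the substitution on {a,b} with χ(a) = aab and χ(b) = abb, and let X_χ be its substitution subshift. Then there exists a continuous surjection F : X_χ → X_χ satisfying F ∘ σ⁴ = σ² ∘ F; that is, (X_χ, σ²) is a topological factor of (X_χ, σ⁴). -/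
open Set Topology Classical

noncomputable section

namespace St17

abbrev P (k : ℕ) (c : Fin 2) : List (Fin 2) := substPow chi k c

lemma fin2 (c : Fin 2) : c = 0 ∨ c = 1 := by revert c; decide

lemma chi_eq (c : Fin 2) : chi c = [0, c, 1] := by
  rcases fin2 c with h | h <;> subst h <;> rfl

lemma chi_length (c : Fin 2) : (chi c).length = 3 := by rw [chi_eq]; rfl

lemma chi_getD0 (c : Fin 2) : (chi c).getD 0 0 = 0 := by rw [chi_eq]; rfl
lemma chi_getD1 (c : Fin 2) : (chi c).getD 1 0 = c := by rw [chi_eq]; rfl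
lemma chi_getD2 (c : Fin 2) : (chi c).getD 2 0 = 1 := by rw [chi_eq]; rfl

lemma P_zero (c : Fin 2) : P 0 c = [c] := rfl
lemma P_succ (k : ℕ) (c : Fin 2) : P (k+1) c = (chi c).flatMap (substPow chi k) := rfl

lemma P_length (k : ℕ) (c : Fin 2) : (P k c).length = 3 ^ k := by
  induction k generalizing c with
  | zero => rfl
  | succ k ih =>
    rw [P_succ, chi_eq]
    simp only [List.flatMap_cons, List.flatMap_nil, List.length_append, List.length_nil]
    rw [ih, ih, ih]
    ring

lemma P_succ_right (k : ℕ) (c : Fin 2) : P (k+1) c = (P k c).flatMap chi := by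
  induction k generalizing c with
  | zero => simp [P_succ, P_zero, substPow]
  | succ k ih =>
    calc P (k+1+1) c = (chi c).flatMap (substPow chi (k+1)) := rfl
    _ = (chi c).flatMap (fun x => (substPow chi k x).flatMap chi) := by
          congr 1; funext x; exact ih x
    _ = ((chi c).flatMap (substPow chi k)).flatMap chi := List.flatMap_assoc.symm
    _ = (P (k+1) c).flatMap chi := rfl

lemma getD_flatMap3 (w : List (Fin 2)) (t s : ℕ) (ht : t < w.length) (hs : s < 3) :
    (w.flatMap chi).getD (3*t+s) 0 = (chi (w.getD t 0)).getD s 0 := by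
  induction w generalizing t with
  | nil => simp at ht
  | cons c w ih =>
    cases t with
    | zero =>
      simp only [List.flatMap_cons]
      rw [show 3*0+s = s by ring]
      rw [List.getD_append _ _ _ _ (by rw [chi_length]; exact hs)]
      rfl
    | succ t =>
      simp only [List.flatMap_cons]
      rw [List.getD_append_right _ _ _ _ (by rw [chi_length]; omega)]
      rw [chi_length]
      rw [show 3*(t+1)+s-3 = 3*t+s by omega]
      rw [ih t (by simpa using ht)]
      rfl

lemma P_decomp (k : ℕ) (c : Fin 2) : P (k+1) c = P k 0 ++ (P k c ++ P k 1) := by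
  rw [P_succ, chi_eq]
  simp [List.flatMap_cons]

lemma prefix0 (k : ℕ) (c : Fin 2) : P k 0 <+: P (k+1) c :=
  ⟨P k c ++ P k 1, (P_decomp k c).symm⟩

lemma suffix1 (k : ℕ) (c : Fin 2) : P k 1 <:+ P (k+1) c :=
  ⟨P k 0 ++ P k c, by rw [P_decomp k c]; simp⟩

lemma prefix_chain {k k' : ℕ} (h : k ≤ k') : P k 0 <+: P k' 0 := by
  induction k' with
  | zero => rw [show k = 0 by omega]
  | succ k' ih =>
    rcases Nat.lt_or_ge k (k'+1) with h' | h'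
    · exact (ih (by omega)).trans (prefix0 k' 0)
    · rw [show k = k'+1 by omega]

lemma suffix_chain {k k' : ℕ} (h : k ≤ k') : P k 1 <:+ P k' 1 := by
  induction k' with
  | zero => rw [show k = 0 by omega]
  | succ k' ih =>
    rcases Nat.lt_or_ge k (k'+1) with h' | h'
    · exact (ih (by omega)).trans (suffix1 k' 1)
    · rw [show k = k'+1 by omega]

lemma getD_of_prefix {l l' : List (Fin 2)} (h : l <+: l') {i : ℕ} (hi : i < l.length) :
    l'.getD i 0 = l.getD i 0 := by
  obtain ⟨t, rfl⟩ := h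
  rw [List.getD_append _ _ _ _ hi]

lemma getD_of_suffix {l l' : List (Fin 2)} (h : l <:+ l') {i : ℕ} :
    l'.getD (l'.length - l.length + i) 0 = l.getD i 0 := by
  obtain ⟨t, rfl⟩ := h
  rw [List.length_append, show t.length + l.length - l.length + i = t.length + i by omega,
    List.getD_append_right _ _ _ _ (by omega)]
  congr 1
  omega


def fl : Fin 2 → Fin 2 := fun c => 1 - c

lemma fl_fl (c : Fin 2) : fl (fl c) = c := by revert c; decide

def FF : (ℤ → Fin 2) → (ℤ → Fin 2) := fun x n => fl (x (2*n))

def chiStar (y : ℤ → Fin 2) : ℤ → Fin 2 := fun n => (chi (y (n / 3))).getD (n % 3).toNat 0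

def x0 : ℤ → Fin 2 := fun n =>
  if 0 ≤ n then (substPow chi (n.toNat+1) 0).getD n.toNat 0
  else (substPow chi (-n).toNat 1).getD ((3 ^ (-n).toNat : ℤ) + n).toNat 0

lemma pow3_pos (k : ℕ) : 0 < 3 ^ k := Nat.pow_pos (by norm_num)

lemma pow3_mono {k K : ℕ} (h : k ≤ K) : (3:ℕ) ^ k ≤ 3 ^ K :=
  Nat.pow_le_pow_right (by norm_num) h

lemma pow3_succ (k : ℕ) : (3:ℕ) ^ (k+1) = 3 * 3 ^ k := by ring

lemma lt_pow3 (m : ℕ) : m < 3 ^ m := Nat.lt_pow_self (by norm_num : 1 < 3)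

lemma getD_P0_stable {k K : ℕ} (h : k ≤ K) {i : ℕ} (hi : i < 3 ^ k) :
    (P K 0).getD i 0 = (P k 0).getD i 0 :=
  getD_of_prefix (prefix_chain h) (by rw [P_length]; exact hi)

lemma getD_P1_stable {k K : ℕ} (h : k ≤ K) (i : ℕ) :
    (P K 1).getD (3 ^ K - 3 ^ k + i) 0 = (P k 1).getD i 0 := by
  have := getD_of_suffix (suffix_chain h) (i := i)
  rw [P_length, P_length] at this
  exact this

lemma x0_eval_nonneg {n : ℤ} (hn : 0 ≤ n) {k : ℕ} (hk : n.toNat < 3 ^ k) :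
    x0 n = (P k 0).getD n.toNat 0 := by
  have h1 : n.toNat < 3 ^ (n.toNat + 1) :=
    lt_of_lt_of_le (lt_pow3 n.toNat) (pow3_mono (Nat.le_succ _))
  calc x0 n = (P (n.toNat+1) 0).getD n.toNat 0 := by rw [x0, if_pos hn]
  _ = (P (max k (n.toNat+1)) 0).getD n.toNat 0 := (getD_P0_stable (le_max_right _ _) h1).symm
  _ = (P k 0).getD n.toNat 0 := getD_P0_stable (le_max_left _ _) hk

lemma x0_eval_neg {n : ℤ} (hn : n < 0) {k : ℕ} (hk : (-n).toNat ≤ 3 ^ k) :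
    x0 n = (P k 1).getD (3 ^ k - (-n).toNat) 0 := by
  set m := (-n).toNat with hm
  have hm1 : 1 ≤ m := by omega
  have hmm : m ≤ 3 ^ m := le_of_lt (lt_pow3 m)
  have hcast : ∀ j : ℕ, ((3 ^ j : ℕ) : ℤ) = (3:ℤ) ^ j := by intro j; push_cast; ring
  have hidx : ((3 ^ m : ℤ) + n).toNat = 3 ^ m - m := by
    have := hcast m; omega
  have key : ∀ K : ℕ, m ≤ 3 ^ K → K ≤ max k m →
      (P K 1).getD (3 ^ K - m) 0 = (P (max k m) 1).getD (3 ^ (max k m) - m) 0 := by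
    intro K hK hKle
    have h2 := getD_P1_stable hKle (3 ^ K - m)
    have h3 : 3 ^ (max k m) - 3 ^ K + (3 ^ K - m) = 3 ^ (max k m) - m := by
      have := pow3_mono hKle; omega
    rw [h3] at h2
    exact h2.symm
  calc x0 n = (P m 1).getD (3 ^ m - m) 0 := by rw [x0, if_neg (by omega), hidx]
  _ = (P (max k m) 1).getD (3 ^ (max k m) - m) 0 := key m hmm (le_max_right _ _)
  _ = (P k 1).getD (3 ^ k - m) 0 := (key k hk (le_max_left _ _)).symm

lemma chiStar_x0 : ∀ n : ℤ, chiStar x0 n = x0 n := by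
  intro n
  rcases le_or_gt 0 n with hn | hn
  · set k := n.toNat with hkdef
    have hk : n.toNat < 3 ^ k := lt_pow3 k
    have hq : (0:ℤ) ≤ n / 3 := by omega
    have hq3 : (n/3).toNat < 3 ^ k := by omega
    have hk1 : n.toNat < 3 ^ (k+1) := lt_of_lt_of_le hk (pow3_mono (Nat.le_succ _))
    rw [chiStar, x0_eval_nonneg hq hq3, x0_eval_nonneg hn hk1, P_succ_right]
    have hidx : n.toNat = 3 * (n/3).toNat + (n % 3).toNat := by omega
    rw [hidx, getD_flatMap3 _ _ _ (by rw [P_length]; exact hq3) (by omega)]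
  · have hcast : ∀ j : ℕ, ((3 ^ j : ℕ) : ℤ) = (3:ℤ) ^ j := by intro j; push_cast; ring
    set k := (-n).toNat with hkdef
    have hk : (-n).toNat ≤ 3 ^ k := le_of_lt (lt_pow3 k)
    have hq : n / 3 < 0 := by omega
    have hqk : (-(n/3)).toNat ≤ 3 ^ k := by omega
    have hk1 : (-n).toNat ≤ 3 ^ (k+1) := le_trans hk (pow3_mono (Nat.le_succ _))
    rw [chiStar, x0_eval_neg hq hqk, x0_eval_neg hn hk1, P_succ_right]
    have hidx : 3 ^ (k+1) - (-n).toNat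
        = 3 * (3 ^ k - (-(n/3)).toNat) + (n % 3).toNat := by
      have h3 := pow3_succ k
      omega
    rw [hidx, getD_flatMap3 _ _ _ (by rw [P_length]; omega) (by omega)]


/-- membership in the language, normalised to letter `0`. -/
def InL0 (v : List (Fin 2)) : Prop := ∃ k : ℕ, v.IsInfix (P k 0)

lemma InL0_of_infix {v : List (Fin 2)} {k : ℕ} {c : Fin 2} (h : v.IsInfix (P k c)) :
    InL0 v := by
  rcases fin2 c with hc | hc
  · exact ⟨k, hc ▸ h⟩
  · exact ⟨k+1, h.trans (hc ▸ (suffix1 k 0).isInfix)⟩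

lemma InL0.flatMap {v : List (Fin 2)} (h : InL0 v) {w : List (Fin 2)}
    (hw : w.IsInfix (v.flatMap chi)) : InL0 w := by
  obtain ⟨k, s, t, hst⟩ := h
  refine ⟨k+1, hw.trans ?_⟩
  rw [P_succ_right, ← hst]
  simp only [List.flatMap_append]
  exact ⟨s.flatMap chi, t.flatMap chi, rfl⟩

lemma P0_infix {k K : ℕ} (h : k < K) (c : Fin 2) : (P k 0).IsInfix (P K c) := by
  have h1 : P k 0 <+: P (K-1) 0 := prefix_chain (by omega)
  have h2 : P (K-1) 0 <+: P (K-1+1) c := prefix0 _ c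
  have : P (K-1+1) c = P K c := by congr 1; omega
  exact (h1.trans (this ▸ h2)).isInfix

lemma seqWord_length {A : Type} (x : ℤ → A) (i : ℤ) (n : ℕ) :
    (seqWord x i n).length = n := by simp [seqWord]

lemma seqWord_getD (x : ℤ → Fin 2) (i : ℤ) {n j : ℕ} (hj : j < n) :
    (seqWord x i n).getD j 0 = x (i + j) := by
  rw [List.getD_eq_getElem _ _ (by rw [seqWord_length]; exact hj)]
  simp [seqWord]

lemma seqWord_congr {A : Type} {x y : ℤ → A} {i i' : ℤ} {n : ℕ}
    (h : ∀ j : ℕ, j < n → x (i + j) = y (i' + j)) :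
    seqWord x i n = seqWord y i' n := by
  unfold seqWord
  congr 1
  funext m
  exact h m m.2

/-- the window lemma: a word of `chiStar z` is an infix of `chi` applied to a word of `z`. -/
lemma window (z : ℤ → Fin 2) (i : ℤ) (n : ℕ) :
    (seqWord (chiStar z) i n).IsInfix
      ((seqWord z (i / 3) ((n + (i % 3).toNat + 2)/3)).flatMap chi) := by
  set o : ℕ := (i % 3).toNat with ho
  set B : ℕ := (n + o + 2)/3 with hB
  set R := (seqWord z (i / 3) B).flatMap chi with hR
  have ho3 : o < 3 := by omega
  have hRlen : R.length = 3 * B := by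
    rw [hR, List.length_flatMap]
    have : ∀ w : List (Fin 2), (w.map (List.length ∘ chi)).sum = 3 * w.length := by
      intro w
      induction w with
      | nil => simp
      | cons c w ih => simp [ih, chi_length]; ring
    have h := this (seqWord z (i / 3) B); rw [seqWord_length] at h; exact h
  have h3B : n + o ≤ 3 * B := by omega
  have key : seqWord (chiStar z) i n = (R.drop o).take n := by
    apply List.ext_getElem
    · rw [seqWord_length, List.length_take, List.length_drop, hRlen]; omega
    · intro j hj hj'
      rw [seqWord_length] at hj
      rw [List.getElem_take, List.getElem_drop]
      have hoj : o + j < R.length := by rw [hRlen]; omega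
      have e1 : (seqWord (chiStar z) i n)[j] = chiStar z (i + j) := by
        rw [← List.getD_eq_getElem _ 0, seqWord_getD _ _ hj]
      rw [e1, ← List.getD_eq_getElem _ 0]
      have hidx : o + j = 3 * ((o+j)/3) + (o+j) % 3 := by omega
      have ht : (o+j)/3 < B := by omega
      rw [hR, hidx, getD_flatMap3 _ _ _ (by rw [seqWord_length]; exact ht) (by omega)]
      rw [seqWord_getD _ _ ht]
      show chiStar z (i+j) = _
      rw [chiStar]
      have hdiv : (i + j) / 3 = i / 3 + ((o+j)/3 : ℕ) := by omega
      have hmod : ((i + j) % 3).toNat = (o+j) % 3 := by omega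
      rw [hdiv, hmod]
  rw [key]
  exact ((List.take_prefix _ _).isInfix).trans ((List.drop_suffix _ _).isInfix)

lemma short_words (x : ℤ → Fin 2) (i : ℤ) {n : ℕ} (hn : n ≤ 2) :
    InL0 (seqWord x i n) := by
  interval_cases n
  · exact ⟨0, by simp [seqWord]⟩
  · have : seqWord x i 1 = [x i] := by
      apply List.ext_getElem
      · simp [seqWord_length]
      · intro j hj _
        rw [seqWord_length] at hj
        interval_cases j
        rw [← List.getD_eq_getElem _ 0, seqWord_getD _ _ (by norm_num)]
        simp
    rw [this]
    rcases fin2 (x i) with h | h <;> rw [h]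
    · exact ⟨1, by decide⟩
    · exact ⟨1, by decide⟩
  · have : seqWord x i 2 = [x i, x (i+1)] := by
      apply List.ext_getElem
      · simp [seqWord_length]
      · intro j hj _
        rw [seqWord_length] at hj
        interval_cases j
        · rw [← List.getD_eq_getElem _ 0, seqWord_getD _ _ (by norm_num)]; simp
        · rw [← List.getD_eq_getElem _ 0, seqWord_getD _ _ (by norm_num)]; simp
    rw [this]
    rcases fin2 (x i) with h | h <;> rcases fin2 (x (i+1)) with h' | h' <;> rw [h, h']
    · exact ⟨2, by decide⟩
    · exact ⟨2, by decide⟩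
    · exact ⟨2, by decide⟩
    · exact ⟨2, by decide⟩

/-- the coupled fixed-point lemma: two sequences exchanged by shifted `chiStar` lie in X. -/
lemma pairZ {y0 y1 : ℤ → Fin 2} {e0 e1 : ℤ}
    (h0 : ∀ n, y0 n = chiStar y1 (n + e0)) (h1 : ∀ n, y1 n = chiStar y0 (n + e1)) :
    y0 ∈ substShift chi ∧ y1 ∈ substShift chi := by
  have main : ∀ n : ℕ, ∀ i : ℤ, InL0 (seqWord y0 i n) ∧ InL0 (seqWord y1 i n) := by
    intro n
    induction n using Nat.strong_induction_on with
    | _ n ih =>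
      intro i
      rcases le_or_gt n 2 with hn | hn
      · exact ⟨short_words _ _ hn, short_words _ _ hn⟩
      · constructor
        · have heq : seqWord y0 i n = seqWord (chiStar y1) (i + e0) n :=
            seqWord_congr (fun j hj => by rw [h0]; ring_nf)
          rw [heq]
          have hw := window y1 (i + e0) n
          have hB : (n + ((i + e0) % 3).toNat + 2)/3 < n := by
            have : ((i + e0) % 3).toNat < 3 := by omega
            omega
          exact (ih _ hB ((i+e0)/3)).2.flatMap hw
        · have heq : seqWord y1 i n = seqWord (chiStar y0) (i + e1) n :=
            seqWord_congr (fun j hj => by rw [h1]; ring_nf)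
          rw [heq]
          have hw := window y0 (i + e1) n
          have hB : (n + ((i + e1) % 3).toNat + 2)/3 < n := by
            have : ((i + e1) % 3).toNat < 3 := by omega
            omega
          exact (ih _ hB ((i+e1)/3)).1.flatMap hw
  constructor <;> intro i n <;> obtain ⟨k, hk⟩ := (main n i).1 <;> try exact ⟨k, 0, hk⟩
  obtain ⟨k', hk'⟩ := (main n i).2
  exact ⟨k', 0, hk'⟩


def Y0 : ℤ → Fin 2 := FF x0
def Y1 : ℤ → Fin 2 := FF (shiftMap x0)

lemma Y0_eq (m : ℤ) : Y0 m = fl (x0 (2*m)) := rfl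
lemma Y1_eq (m : ℤ) : Y1 m = fl (x0 (2*m+1)) := by
  show fl (shiftMap x0 (2*m)) = _
  rw [shiftMap]

/-- `Y0 = σ⁻¹ χ*(Y1)`. -/
lemma id0 (n : ℤ) : Y0 n = chiStar Y1 (n + (-1)) := by
  have hx : x0 (2*n) = chiStar x0 (2*n) := (chiStar_x0 (2*n)).symm
  rw [Y0_eq, hx, chiStar, chiStar]
  have h3 : n % 3 = 0 ∨ n % 3 = 1 ∨ n % 3 = 2 := by omega
  rcases h3 with h | h | h
  · have e1 : (2*n)/3 = 2*(n/3) := by omega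
    have e2 : ((2*n) % 3).toNat = 0 := by omega
    have e3 : (n + -1)/3 = n/3 - 1 := by omega
    have e4 : ((n + -1) % 3).toNat = 2 := by omega
    rw [e2, e4, chi_getD0, chi_getD2]
    rfl
  · have e2 : ((2*n) % 3).toNat = 2 := by omega
    have e4 : ((n + -1) % 3).toNat = 0 := by omega
    rw [e2, e4, chi_getD2, chi_getD0]
    rfl
  · have e1 : (2*n)/3 = 2*(n/3)+1 := by omega
    have e2 : ((2*n) % 3).toNat = 1 := by omega
    have e3 : (n + -1)/3 = n/3 := by omega
    have e4 : ((n + -1) % 3).toNat = 1 := by omega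
    rw [e1, e2, e3, e4, chi_getD1, chi_getD1, Y1_eq]

/-- `Y1 = σ χ*(Y0)`. -/
lemma id1 (n : ℤ) : Y1 n = chiStar Y0 (n + 1) := by
  have hx : x0 (2*n+1) = chiStar x0 (2*n+1) := (chiStar_x0 (2*n+1)).symm
  rw [Y1_eq, hx, chiStar, chiStar]
  have h3 : n % 3 = 0 ∨ n % 3 = 1 ∨ n % 3 = 2 := by omega
  rcases h3 with h | h | h
  · have e1 : (2*n+1)/3 = 2*(n/3) := by omega
    have e2 : ((2*n+1) % 3).toNat = 1 := by omega
    have e3 : (n + 1)/3 = n/3 := by omega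
    have e4 : ((n + 1) % 3).toNat = 1 := by omega
    rw [e1, e2, e3, e4, chi_getD1, chi_getD1, Y0_eq]
  · have e2 : ((2*n+1) % 3).toNat = 0 := by omega
    have e4 : ((n + 1) % 3).toNat = 2 := by omega
    rw [e2, e4, chi_getD0, chi_getD2]
    rfl
  · have e2 : ((2*n+1) % 3).toNat = 2 := by omega
    have e4 : ((n + 1) % 3).toNat = 0 := by omega
    rw [e2, e4, chi_getD2, chi_getD0]
    rfl

lemma Y0_mem : Y0 ∈ substShift chi := (pairZ id0 id1).1
lemma Y1_mem : Y1 ∈ substShift chi := (pairZ id0 id1).2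

lemma x0_mem : x0 ∈ substShift chi := by
  have h : ∀ n : ℤ, x0 n = chiStar x0 (n + 0) := by
    intro n; rw [add_zero, chiStar_x0]
  exact (pairZ h h).1


/-- every language word occurs in `x0` at a nonnegative position. -/
lemma occ_x0 {v : List (Fin 2)} (h : InL0 v) :
    ∃ t : ℤ, 0 ≤ t ∧ ∀ j : ℕ, j < v.length → x0 (t + j) = v.getD j 0 := by
  obtain ⟨k, st, tt, hst⟩ := h
  refine ⟨st.length, by positivity, fun j hj => ?_⟩
  have hlen : st.length + j < 3 ^ k := by
    have := congrArg List.length hst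
    rw [P_length] at this
    simp only [List.length_append] at this
    omega
  have h0 : (0:ℤ) ≤ (st.length : ℤ) + j := by positivity
  rw [x0_eval_nonneg h0 (k := k) (by omega), ← hst]
  rw [show ((st.length : ℤ) + (j:ℤ)).toNat = st.length + j by omega]
  rw [List.append_assoc, List.getD_append_right _ _ _ _ (by omega),
    show st.length + j - st.length = j by omega,
    List.getD_append _ _ _ _ hj]

/-- the factor map `FF` maps the subshift into itself. -/
lemma FF_mapsTo : Set.MapsTo FF (substShift chi) (substShift chi) := by
  intro x hx i n
  rcases Nat.eq_zero_or_pos n with rfl | hn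
  · exact ⟨0, 0, by simp [seqWord]⟩
  -- the window of x determining the output word
  obtain ⟨k, c, hw⟩ := hx (2*i) (2*n-1)
  have hInL : InL0 (seqWord x (2*i) (2*n-1)) := InL0_of_infix hw
  obtain ⟨t, ht0, hocc⟩ := occ_x0 hInL
  have hlen : (seqWord x (2*i) (2*n-1)).length = 2*n-1 := seqWord_length _ _ _
  have hval : ∀ j : ℕ, j < 2*n-1 → x0 (t + j) = x (2*i + j) := by
    intro j hj
    rw [hocc j (by omega), seqWord_getD _ _ (by omega)]
  rcases Int.even_or_odd t with ⟨s, hs⟩ | ⟨s, hs⟩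
  · -- even: words of F x are words of Y0
    have heq : seqWord (FF x) i n = seqWord Y0 s n := by
      apply seqWord_congr
      intro j hj
      show fl (x (2*(i+j))) = fl (x0 (2*(s+j)))
      have h1 : x0 (t + (2*j : ℕ)) = x (2*i + (2*j : ℕ)) := hval (2*j) (by omega)
      have h2 : (2:ℤ)*(s+j) = t + (2*j:ℕ) := by push_cast; omega
      have h3 : (2:ℤ)*(i+j) = 2*i + (2*j:ℕ) := by push_cast; ring
      rw [h2, h3, h1]
    rw [heq]
    exact Y0_mem s n
  · -- odd: words of F x are words of Y1
    have heq : seqWord (FF x) i n = seqWord Y1 s n := by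
      apply seqWord_congr
      intro j hj
      show fl (x (2*(i+j))) = fl (x0 (2*(s+j)+1))
      have h1 : x0 (t + (2*j : ℕ)) = x (2*i + (2*j : ℕ)) := hval (2*j) (by omega)
      have h2 : (2:ℤ)*(s+j)+1 = t + (2*j:ℕ) := by push_cast; omega
      have h3 : (2:ℤ)*(i+j) = 2*i + (2*j:ℕ) := by push_cast; ring
      rw [h2, h3, h1]
    rw [heq]
    exact Y1_mem s n


lemma chiStar_shiftZ (e : ℤ) (z : ℤ → Fin 2) :
    chiStar (shiftZ e z) = shiftZ (3*e) (chiStar z) := by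
  funext n
  show (chi (z (n/3 + e))).getD ((n % 3)).toNat 0
      = (chi (z ((n + 3*e)/3))).getD (((n + 3*e) % 3)).toNat 0
  have e1 : (n + 3*e)/3 = n/3 + e := by omega
  have e2 : (n + 3*e) % 3 = n % 3 := by omega
  rw [e1, e2]

lemma iter_shiftZ (m : ℕ) (e : ℤ) (z : ℤ → Fin 2) :
    chiStar^[m] (shiftZ e z) = shiftZ (3^m * e) (chiStar^[m] z) := by
  induction m generalizing e z with
  | zero => simp [shiftZ]
  | succ m ih =>
    rw [Function.iterate_succ_apply, chiStar_shiftZ, ih, Function.iterate_succ_apply]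
    congr 1
    push_cast
    ring

lemma Y0_funeq : Y0 = shiftZ 2 (chiStar^[2] Y0) := by
  funext n
  have h1 : Y1 = shiftZ 1 (chiStar Y0) := by
    funext m
    exact id1 m
  rw [shiftZ]
  rw [id0 n, h1, chiStar_shiftZ]
  show shiftZ 3 (chiStar (chiStar Y0)) (n + -1) = chiStar^[2] Y0 (n + 2)
  rw [shiftZ]
  have : chiStar (chiStar Y0) = chiStar^[2] Y0 := by
    rw [Function.iterate_succ_apply, Function.iterate_one]
  rw [this]
  congr 1
  ring

lemma eqK (K : ℕ) : ∃ e : ℤ, ∀ n : ℤ, Y0 n = (chiStar^[2*K] Y0) (n + e) := by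
  induction K with
  | zero => exact ⟨0, fun n => by simp⟩
  | succ K ih =>
    obtain ⟨e, he⟩ := ih
    refine ⟨e + 3^(2*K)*2, fun n => ?_⟩
    rw [he n]
    conv_lhs => rw [Y0_funeq]
    rw [iter_shiftZ]
    show chiStar^[2*K] (chiStar^[2] Y0) (n + e + 3^(2*K)*2) = _
    rw [← Function.iterate_add_apply]
    have h1 : 2*K + 2 = 2*(K+1) := by ring
    rw [h1]
    congr 1
    ring

lemma iter_block : ∀ (K : ℕ) (z : ℤ → Fin 2) (j : ℕ), j < 3^K →
    (chiStar^[K] z) j = (P K (z 0)).getD j 0 := by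
  intro K
  induction K with
  | zero =>
    intro z j hj
    interval_cases j
    simp [P_zero]
  | succ K ih =>
    intro z j hj
    rw [Function.iterate_succ_apply']
    show (chi ((chiStar^[K] z) ((j:ℤ)/3))).getD (((j:ℤ) % 3)).toNat 0 = _
    have e1 : (j:ℤ)/3 = ((j/3 : ℕ) : ℤ) := by omega
    have e2 : ((j:ℤ) % 3).toNat = j % 3 := by omega
    have hj3 : j/3 < 3 ^ K := by
      have := pow3_succ K
      omega
    have hr : (P (K+1) (z 0)).getD j 0 = (chi ((P K (z 0)).getD (j/3) 0)).getD (j % 3) 0 := by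
      conv_lhs => rw [P_succ_right, show j = 3*(j/3) + j % 3 from by omega]
      exact getD_flatMap3 _ _ _ (by rw [P_length]; exact hj3) (by omega)
    rw [e1, e2, ih z (j/3) hj3, hr]

/-- every language word occurs in `Y0`. -/
lemma occ_Y0 {v : List (Fin 2)} (h : InL0 v) :
    ∃ s : ℤ, ∀ j : ℕ, j < v.length → Y0 (s + j) = v.getD j 0 := by
  obtain ⟨k, hk⟩ := h
  set K := k + 1 with hK
  have hinf : v.IsInfix (P (2*K) (Y0 0)) := hk.trans (P0_infix (by omega) _)
  obtain ⟨e, he⟩ := eqK K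
  have hblock : ∀ j : ℕ, j < 3^(2*K) → Y0 ((j:ℤ) - e) = (P (2*K) (Y0 0)).getD j 0 := by
    intro j hj
    rw [he ((j:ℤ) - e), show (j:ℤ) - e + e = (j:ℤ) by ring]
    exact iter_block (2*K) Y0 j hj
  obtain ⟨st, tt, hst⟩ := hinf
  refine ⟨(st.length : ℤ) - e, fun j hj => ?_⟩
  have hlen : st.length + j < 3 ^ (2*K) := by
    have := congrArg List.length hst
    rw [P_length] at this
    simp only [List.length_append] at this
    omega
  have h1 : ((st.length : ℤ) - e) + j = ((st.length + j : ℕ) : ℤ) - e := by push_cast; ring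
  rw [h1, hblock _ hlen, ← hst]
  rw [List.append_assoc, List.getD_append_right _ _ _ _ (by omega),
    show st.length + j - st.length = j by omega,
    List.getD_append _ _ _ _ hj]


lemma shift_mem {x : ℤ → Fin 2} (h : x ∈ substShift chi) (e : ℤ) :
    shiftZ e x ∈ substShift chi := by
  intro i n
  have heq : seqWord (shiftZ e x) i n = seqWord x (i + e) n :=
    seqWord_congr (fun j hj => by show x (i + j + e) = x (i + e + j); congr 1; ring)
  rw [heq]
  exact h (i+e) n

lemma FF_surjOn : Set.SurjOn FF (substShift chi) (substShift chi) := by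
  intro y hy
  set C : ℕ → Set (ℤ → Fin 2) := fun k =>
    substShift chi ∩ ⋂ (n : ℤ) (_ : -(k:ℤ) ≤ n) (_ : n ≤ (k:ℤ)),
      {x : ℤ → Fin 2 | x (2*n) = fl (y n)} with hC
  have hXclosed : IsClosed (substShift chi) := by
    rw [← isOpen_compl_iff, isOpen_iff_forall_mem_open]
    intro x hx
    simp only [Set.mem_compl_iff, substShift, Set.mem_setOf_eq, not_forall] at hx
    obtain ⟨i, n, hn⟩ := hx
    refine ⟨{z : ℤ → Fin 2 | ∀ j : ℕ, j < n → z (i + j) = x (i + j)}, ?_, ?_, fun j hj => rfl⟩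
    · intro z hz
      simp only [Set.mem_compl_iff, substShift, Set.mem_setOf_eq, not_forall]
      refine ⟨i, n, ?_⟩
      rw [seqWord_congr (fun j hj => hz j hj)]
      exact hn
    · have : {z : ℤ → Fin 2 | ∀ j : ℕ, j < n → z (i + j) = x (i + j)}
          = ⋂ j ∈ Finset.range n, {z : ℤ → Fin 2 | z (i + (j:ℕ)) = x (i + (j:ℕ))} := by
        ext z
        simp [Finset.mem_range]
      rw [this]
      apply isOpen_biInter_finset
      intro j hj
      have hop : IsOpen ((fun z : ℤ → Fin 2 => z (i + (j:ℕ))) ⁻¹' {x (i + (j:ℕ))}) :=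
        (isOpen_discrete _).preimage (continuous_apply (i + (j:ℕ)))
      exact hop
  have hclosed : ∀ k, IsClosed (C k) := by
    intro k
    apply hXclosed.inter
    apply isClosed_iInter; intro n
    apply isClosed_iInter; intro _
    apply isClosed_iInter; intro _
    exact IsClosed.preimage (continuous_apply (2*n)) isClosed_singleton
  have hne : ∀ k, (C k).Nonempty := by
    intro k
    set v := seqWord y (-(k:ℤ)) (2*k+1) with hv
    have hvL : InL0 v := by
      obtain ⟨k', a, h⟩ := hy (-(k:ℤ)) (2*k+1)
      exact InL0_of_infix h
    obtain ⟨s, hs⟩ := occ_Y0 hvL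
    refine ⟨shiftZ (2*(s+k)) x0, shift_mem x0_mem _, ?_⟩
    simp only [Set.mem_iInter, Set.mem_setOf_eq]
    intro n h1 h2
    have hj : (n + k).toNat < 2*k+1 := by omega
    have hocc := hs (n+k).toNat (by rw [hv, seqWord_length]; exact hj)
    rw [hv, seqWord_getD _ _ hj] at hocc
    have hcast : (((n + k).toNat : ℕ) : ℤ) = n + k := by omega
    rw [hcast] at hocc
    have hy' : Y0 (s + (n + k)) = y n := by
      rw [hocc]; congr 1; ring
    show shiftZ (2*(s+k)) x0 (2*n) = fl (y n)
    rw [← hy', shiftZ]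
    have : Y0 (s + (n+k)) = fl (x0 (2*n + 2*(s+k))) := by
      rw [Y0_eq]; congr 2; ring
    rw [this, fl_fl]
  have hdir : Directed (fun (A B : Set (ℤ → Fin 2)) => A ⊇ B) C := by
    intro k l
    refine ⟨max k l, ?_, ?_⟩
    · intro x hx
      exact ⟨hx.1, by
        have h2 := hx.2
        simp only [Set.mem_iInter, Set.mem_setOf_eq] at h2 ⊢
        intro n hn1 hn2
        exact h2 n (by push_cast at hn1 ⊢; omega) (by push_cast at hn2 ⊢; omega)⟩
    · intro x hx
      exact ⟨hx.1, by
        have h2 := hx.2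
        simp only [Set.mem_iInter, Set.mem_setOf_eq] at h2 ⊢
        intro n hn1 hn2
        exact h2 n (by push_cast at hn1 ⊢; omega) (by push_cast at hn2 ⊢; omega)⟩
  have hint : (⋂ k, C k).Nonempty := by
    apply IsCompact.nonempty_iInter_of_directed_nonempty_isCompact_isClosed C hdir hne
      (fun k => (hclosed k).isCompact) hclosed
  obtain ⟨x, hx⟩ := hint
  simp only [Set.mem_iInter] at hx
  refine ⟨x, (hx 0).1, ?_⟩
  funext n
  have hxk := (hx n.natAbs).2
  simp only [Set.mem_iInter, Set.mem_setOf_eq] at hxk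
  have := hxk n (by omega) (by omega)
  show fl (x (2*n)) = y n
  rw [this, fl_fl]

lemma FF_cont : Continuous FF := by
  apply continuous_pi
  intro n
  exact (continuous_of_discreteTopology (f := fl)).comp (continuous_apply (2*n))

lemma shiftMap_iter (k : ℕ) (x : ℤ → Fin 2) (n : ℤ) : (shiftMap^[k] x) n = x (n + k) := by
  induction k generalizing x n with
  | zero => simp
  | succ k ih =>
    rw [Function.iterate_succ_apply, ih]
    show x (n + k + 1) = x (n + (k+1 : ℕ))
    congr 1
    push_cast
    ring

lemma FF_semiconj (x : ℤ → Fin 2) : FF (shiftMap^[4] x) = shiftMap^[2] (FF x) := by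
  funext n
  rw [shiftMap_iter 2 (FF x) n]
  show fl ((shiftMap^[4] x) (2*n)) = fl (x (2*(n + 2)))
  rw [shiftMap_iter 4 x (2*n)]
  congr 2
  push_cast
  ring

end St17

/-- (X_χ, σ^2) is a topological factor of (X_χ, σ^4). -/
theorem statement17 :
    IsFactorOn (substShift chi) (shiftMap^[4]) (substShift chi) (shiftMap^[2]) := by
  exact ⟨St17.FF, St17.FF_mapsTo, St17.FF_cont.continuousOn, St17.FF_surjOn,
    fun x _ => St17.FF_semiconj x⟩

end
end
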